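/- Let n ∈ ℕ and let Q, Q̇, X, Y : ℝ → Matrix (Fin n) (Fin n) ℂ be such that for every x ∈ ℝ: HasDerivAt X (Q(x)·X(x)) x, HasDerivAt Y (Q(x)·Y(x) + Q̇(x)·X(x)) x, and X(x) is invertible. Then for every x ∈ ℝ the function Ω(t) = X(t)⁻¹·Y(t) satisfies HasDerivAt Ω (X(x)⁻¹·Q̇(x)·X(x)) x. -/

import Mathlib

open Matrix

attribute [local instance] Matrix.linftyOpNormedRing Matrix.linftyOpNormedSpace
attribute [local instance] Matrix.linftyOpNormedAlgebra

/-- The identity `Ω' = X⁻¹ Q̇ X` of the paper's Lemma 2.2: if `X' = Q X`,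
`Y' = Q Y + Q̇ X`, and every `X(x)` is invertible, then `Ω = X⁻¹ Y` satisfies
`HasDerivAt Ω (X(x)⁻¹ Q̇(x) X(x)) x` for every `x`. -/
theorem deriv_inv_mul_of_linear_system
    (n : ℕ) (Q Qdot X Y : ℝ → Matrix (Fin n) (Fin n) ℂ)
    (hX : ∀ x : ℝ, HasDerivAt X (Q x * X x) x)
    (hY : ∀ x : ℝ, HasDerivAt Y (Q x * Y x + Qdot x * X x) x)
    (hinv : ∀ x : ℝ, IsUnit (X x).det) :
    ∀ x : ℝ, HasDerivAt (fun t => (X t)⁻¹ * Y t) ((X x)⁻¹ * Qdot x * X x) x := by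
  intro x
  obtain ⟨u, hu⟩ := (Matrix.isUnit_iff_isUnit_det (X x)).2 (hinv x)
  have hXinv : HasDerivAt (fun t => (X t)⁻¹)
      (-((X x)⁻¹ * (Q x * X x) * (X x)⁻¹)) x := by
    have h1 : HasDerivAt (fun t => Ring.inverse (X t))
        ((-ContinuousLinearMap.mulLeftRight ℝ _ (↑u⁻¹) (↑u⁻¹)) (Q x * X x)) x := by
      have := (hasFDerivAt_ringInverse (𝕜 := ℝ) u)
      rw [hu] at this
      exact this.comp_hasDerivAt x (hX x)
    have h2 : (↑u⁻¹ : Matrix (Fin n) (Fin n) ℂ) = (X x)⁻¹ := by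
      rw [Matrix.coe_units_inv, hu]
    simp only [ContinuousLinearMap.neg_apply, ContinuousLinearMap.mulLeftRight_apply, h2] at h1
    have h3 : (fun t => Ring.inverse (X t)) = fun t => (X t)⁻¹ := by
      funext t; rw [Matrix.nonsing_inv_eq_ringInverse]
    rw [h3] at h1
    convert h1 using 1
  have hmul := hXinv.mul (hY x)
  have hid : X x * (X x)⁻¹ = 1 := Matrix.mul_nonsing_inv _ (hinv x)
  convert hmul using 1
  any_goals rfl
  have heq : -((X x)⁻¹ * (Q x * X x) * (X x)⁻¹) * Y x + (X x)⁻¹ * (Q x * Y x + Qdot x * X x)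
      = -((X x)⁻¹ * Q x * (X x * (X x)⁻¹) * Y x) + ((X x)⁻¹ * Q x * Y x + (X x)⁻¹ * Qdot x * X x) := by
    noncomm_ring
  rw [heq, hid]
  noncomm_ring
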